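/- Let G be a graph with adjacency matrix A and let r be an eigenvalue of A with multiplicity f. Then there exists a set S of n - f vertices of G such that the induced subgraph G[S] does not have r as an eigenvalue of its adjacency matrix. -/

import Mathlib

open Submodule Matrix

/-- Membership in the span of standard basis vectors indexed by `S` is
equivalent to vanishing off `S`. -/
lemma aux_mem_span_single_iff {V : Type*} [Fintype V] [DecidableEq V]
    (S : Set V) (w : V → ℝ) :
    w ∈ Submodule.span ℝ ((fun v => Pi.single v (1 : ℝ)) '' S) ↔
      ∀ v, v ∉ S → w v = 0 := by
  classical
  constructor
  · intro hw v hv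
    induction hw using Submodule.span_induction with
    | mem z hz =>
      obtain ⟨u, hu, rfl⟩ := hz
      have hne : v ≠ u := by rintro rfl; exact hv hu
      simp [Pi.single_apply, hne]
    | zero => rfl
    | add a b _ _ ha hb => simp [ha, hb]
    | smul c a _ ha => simp [ha]
  · intro hw
    have hrepr : w = ∑ v ∈ Finset.univ.filter (· ∈ S), w v • (Pi.single v 1 : V → ℝ) := by
      funext u
      rw [Finset.sum_apply]
      by_cases hu : u ∈ S
      · rw [Finset.sum_eq_single u]
        · simp
        · intro b _ hb
          simp [Pi.single_eq_of_ne (Ne.symm hb)]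
        · intro h
          exact absurd (Finset.mem_filter.2 ⟨Finset.mem_univ u, hu⟩) h
      · rw [hw u hu]
        symm
        apply Finset.sum_eq_zero
        intro b hb
        have hbu : b ≠ u := by
          rintro rfl
          exact hu (Finset.mem_filter.1 hb).2
        simp [Pi.single_eq_of_ne (Ne.symm hbu)]
    rw [hrepr]
    apply Submodule.sum_mem
    intro v hv
    exact Submodule.smul_mem _ _ (Submodule.subset_span
      ⟨v, (Finset.mem_filter.1 hv).2, rfl⟩)

/-- Star complement existence: if `r` is an eigenvalue of the adjacency matrix
of `G` with multiplicity `f`, then there is a set `S` of `n - f` vertices such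
that `r` is not an eigenvalue of the adjacency matrix of the induced subgraph
on `S`. -/
theorem stmt16 {V : Type*} [Fintype V] [DecidableEq V]
    (G : SimpleGraph V) [DecidableRel G.Adj]
    (r : ℝ) (f : ℕ)
    (hr : Module.End.HasEigenvalue (Matrix.toLin' (G.adjMatrix ℝ)) r)
    (hf : f = Module.finrank ℝ
      (Module.End.eigenspace (Matrix.toLin' (G.adjMatrix ℝ)) r)) :
    ∃ S : Finset V, S.card = Fintype.card V - f ∧
      ¬ ∃ x : {v // v ∈ S} → ℝ, x ≠ 0 ∧
        ((G.adjMatrix ℝ).submatrix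
          (Subtype.val : {v // v ∈ S} → V) Subtype.val).mulVec x = r • x := by
  classical
  set A : Matrix V V ℝ := G.adjMatrix ℝ with hA
  set K : Submodule ℝ (V → ℝ) :=
    Module.End.eigenspace (Matrix.toLin' A) r with hK
  have hmemK : ∀ w : V → ℝ, w ∈ K ↔ A.mulVec w = r • w := by
    intro w
    rw [hK, Module.End.mem_eigenspace_iff, Matrix.toLin'_apply]
  -- a basis of K, viewed as an independent set in the ambient space
  have : FiniteDimensional ℝ (V → ℝ) := by infer_instance
  let bK := Module.finBasis ℝ K
  let g : Fin (Module.finrank ℝ K) → (V → ℝ) := fun i => (bK i : V → ℝ)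
  have hg : LinearIndependent ℝ g :=
    bK.linearIndependent.map' K.subtype (Submodule.ker_subtype K)
  set s : Set (V → ℝ) := Set.range g with hs_def
  have hs : LinearIndependent ℝ ((↑) : s → (V → ℝ)) := hg.linearIndepOn_id
  have hspan_s : Submodule.span ℝ s = K := by
    have : s = K.subtype '' Set.range bK := by
      rw [hs_def]
      ext z
      simp [g, Set.range_comp]
    rw [this, Submodule.span_image, bK.span_eq, Submodule.map_top,
      Submodule.range_subtype]
  -- extend to a basis of the whole space using standard basis vectors
  set t : Set (V → ℝ) := s ∪ Set.range (fun v : V => Pi.single v (1 : ℝ)) with ht_def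
  have hst : s ⊆ t := Set.subset_union_left
  have ht : ⊤ ≤ Submodule.span ℝ t := by
    rw [ht_def, Submodule.span_union]
    intro z _
    apply Submodule.mem_sup_right
    have := (Pi.basisFun ℝ V).span_eq
    have hrange : Set.range (fun v : V => Pi.single v (1 : ℝ)) =
        Set.range (Pi.basisFun ℝ V) := by
      ext z; simp [Pi.basisFun_apply]
    rw [hrange, this]
    trivial
  set b : Set (V → ℝ) := LinearIndepOn.extend (v := id) (s := s) hs hst with hb_def
  have hb_indep : LinearIndependent ℝ ((↑) : b → (V → ℝ)) :=
    LinearIndepOn.linearIndepOn_extend (v := id) (s := s) hs hst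
  have hsb : s ⊆ b := LinearIndepOn.subset_extend (v := id) (s := s) hs hst
  have hspan_b : Submodule.span ℝ b = ⊤ :=
    le_antisymm le_top (le_trans ht (le_of_eq (LinearIndepOn.span_extend_eq_span (s := s) hs hst).symm))
  have hb_sub : b ⊆ t := LinearIndepOn.extend_subset (v := id) (s := s) hs hst
  -- finiteness and cardinalities
  have hb_fin : b.Finite := by
    have : Set.Finite t := by
      apply Set.Finite.union
      · exact Set.finite_range g
      · exact Set.finite_range _
    exact this.subset hb_sub
  have hs_fin : s.Finite := Set.finite_range g
  have hcard_b : b.ncard = Fintype.card V := by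
    haveI : Fintype b := hb_fin.fintype
    have hbasis : Module.Basis b ℝ (V → ℝ) := Module.Basis.mk hb_indep (by
      rw [Subtype.range_coe]; exact le_of_eq hspan_b.symm)
    have := Module.finrank_eq_card_basis hbasis
    rw [Module.finrank_fintype_fun_eq_card] at this
    rw [Set.ncard_eq_toFinset_card', Set.toFinset_card]
    exact this.symm
  have hcard_s : s.ncard = f := by
    rw [hs_def, ← Set.image_univ, Set.ncard_image_of_injective _ hg.injective,
      Set.ncard_univ, Nat.card_eq_fintype_card, Fintype.card_fin]
    exact hf.symm
  have hfn : f ≤ Fintype.card V := by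
    rw [← hcard_s, ← hcard_b]
    exact Set.ncard_le_ncard hsb hb_fin
  -- the vertex set S
  set Sset : Set V := {v : V | Pi.single v (1 : ℝ) ∈ b \ s} with hSset
  have hsingle_inj : Function.Injective (fun v : V => Pi.single v (1 : ℝ)) := by
    intro u v huv
    by_contra h
    have h1 := congrFun huv u
    simp only at h1
    rw [Pi.single_eq_same, Pi.single_eq_of_ne h] at h1
    exact one_ne_zero h1
  have himage : (fun v : V => Pi.single v (1 : ℝ)) '' Sset = b \ s := by
    ext z
    constructor
    · rintro ⟨v, hv, rfl⟩; exact hv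
    · intro hz
      have hzt : z ∈ t := hb_sub hz.1
      rw [ht_def] at hzt
      rcases hzt with hzs | ⟨v, rfl⟩
      · exact absurd hzs hz.2
      · exact ⟨v, hz, rfl⟩
  set Sfin : Finset V := (Set.toFinite Sset).toFinset with hSfin
  have hmemS : ∀ v : V, v ∈ Sfin ↔ Pi.single v (1 : ℝ) ∈ b \ s := by
    intro v; rw [hSfin, Set.Finite.mem_toFinset]; rfl
  have hcard_S : Sfin.card = Fintype.card V - f := by
    have h1 : Sset.ncard = (b \ s).ncard := by
      rw [← himage, Set.ncard_image_of_injective _ hsingle_inj]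
    have h2 : (b \ s).ncard = b.ncard - s.ncard := Set.ncard_diff hsb hs_fin
    rw [hSfin, ← Set.ncard_eq_toFinset_card Sset (Set.toFinite Sset), h1, h2,
      hcard_b, hcard_s]
  -- the span of standard vectors over Sset
  set P : Submodule ℝ (V → ℝ) :=
    Submodule.span ℝ ((fun v : V => Pi.single v (1 : ℝ)) '' Sset) with hPdef
  have hP : P = Submodule.span ℝ (b \ s) := by rw [hPdef, himage]
  have hmemP : ∀ w : V → ℝ, w ∈ P ↔ ∀ v, v ∉ Sset → w v = 0 := by
    intro w; rw [hPdef]; exact aux_mem_span_single_iff Sset w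
  have hKP_disj : Disjoint K P := by
    rw [← hspan_s, hP]
    have := hb_indep.disjoint_span_image (s := (↑) ⁻¹' s) (t := (↑) ⁻¹' (b \ s))
      (Set.disjoint_left.2 (by
        rintro ⟨z, hz⟩ hz1 hz2
        exact hz2.2 hz1))
    have h1 : ((↑) : b → (V → ℝ)) '' ((↑) ⁻¹' s) = s := by
      rw [Subtype.image_preimage_coe]
      exact Set.inter_eq_right.2 hsb
    have h2 : ((↑) : b → (V → ℝ)) '' ((↑) ⁻¹' (b \ s)) = b \ s := by
      rw [Subtype.image_preimage_coe]
      exact Set.inter_eq_right.2 Set.diff_subset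
    rwa [h1, h2] at this
  have hKP_top : K ⊔ P = ⊤ := by
    rw [← hspan_s, hP, ← Submodule.span_union, Set.union_diff_cancel hsb, hspan_b]
  refine ⟨Sfin, hcard_S, ?_⟩
  rintro ⟨x, hx0, hxe⟩
  -- extend x by zero
  set xt : V → ℝ := fun v => if h : v ∈ Sfin then x ⟨v, h⟩ else 0 with hxt
  have hxt_pos : ∀ (u : V) (h : u ∈ Sfin), xt u = x ⟨u, h⟩ := fun u h => dif_pos h
  have hxt_neg : ∀ (u : V), u ∉ Sfin → xt u = 0 := fun u h => dif_neg h
  have hxt_zero : ∀ v, v ∉ Sset → xt v = 0 := by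
    intro v hv
    exact hxt_neg v (fun h => hv ((hmemS v).1 h))
  set y : V → ℝ := A.mulVec xt - r • xt with hy
  -- y vanishes on Sset
  have hyS : ∀ v, v ∈ Sset → y v = 0 := by
    intro v hv
    have hvS : v ∈ Sfin := (hmemS v).2 hv
    have hzero : ∀ u ∈ Finset.univ, u ∉ Sfin → A v u * xt u = 0 := by
      intro u _ hu
      rw [hxt_neg u hu, mul_zero]
    have h2 : A.mulVec xt v = ∑ u ∈ Sfin, A v u * xt u :=
      (Finset.sum_subset (Finset.subset_univ Sfin) hzero).symm
    have h3 : ∑ u ∈ Sfin, A v u * xt u = ∑ u ∈ Sfin.attach, A v u.1 * x u := by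
      rw [← Finset.sum_attach Sfin (fun u => A v u * xt u)]
      exact Finset.sum_congr rfl (fun u _ => by rw [hxt_pos u.1 u.2])
    have h4 := congrFun hxe ⟨v, hvS⟩
    simp only [Matrix.mulVec, dotProduct, Matrix.submatrix_apply,
      Pi.smul_apply, smul_eq_mul] at h4
    have h5 : ∑ u ∈ Sfin.attach, A v u.1 * x u = r * x ⟨v, hvS⟩ := by
      rw [← h4, Finset.attach_eq_univ]
    have h6 : xt v = x ⟨v, hvS⟩ := hxt_pos v hvS
    rw [hy]
    show A.mulVec xt v - (r • xt) v = 0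
    rw [h2, h3, h5, Pi.smul_apply, h6, smul_eq_mul, sub_self]
  -- y is orthogonal to K
  have hyK : ∀ k ∈ K, y ⬝ᵥ k = 0 := by
    intro k hk
    have hk' : A.mulVec k = r • k := (hmemK k).1 hk
    have hsymm : Aᵀ = A := G.transpose_adjMatrix
    have h1 : (A.mulVec xt) ⬝ᵥ k = xt ⬝ᵥ (A.mulVec k) := by
      rw [dotProduct_comm, Matrix.dotProduct_mulVec, ← Matrix.mulVec_transpose,
        hsymm, dotProduct_comm]
    rw [hy, sub_dotProduct, h1, hk', smul_dotProduct,
      dotProduct_smul]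
    simp [dotProduct_comm xt k]
  -- y is orthogonal to P
  have hyP : ∀ p ∈ P, y ⬝ᵥ p = 0 := by
    intro p hp
    have hp' := (hmemP p).1 hp
    apply Finset.sum_eq_zero
    intro v _
    by_cases hv : v ∈ Sset
    · rw [hyS v hv, zero_mul]
    · rw [hp' v hv, mul_zero]
  -- hence y = 0
  have hy0 : y = 0 := by
    have hyy : y ⬝ᵥ y = 0 := by
      have hmem : y ∈ (⊤ : Submodule ℝ (V → ℝ)) := trivial
      rw [← hKP_top] at hmem
      obtain ⟨k, hk, p, hp, hkp⟩ := Submodule.mem_sup.1 hmem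
      calc y ⬝ᵥ y = y ⬝ᵥ (k + p) := by rw [hkp]
        _ = y ⬝ᵥ k + y ⬝ᵥ p := dotProduct_add y k p
        _ = 0 := by rw [hyK k hk, hyP p hp, add_zero]
    exact dotProduct_self_eq_zero.1 hyy
  -- xt is in both K and P, hence zero
  have hxtK : xt ∈ K := by
    rw [hmemK]
    exact sub_eq_zero.1 hy0
  have hxtP : xt ∈ P := (hmemP xt).2 hxt_zero
  have hxt0 : xt = 0 := Submodule.disjoint_def.1 hKP_disj xt hxtK hxtP
  apply hx0
  funext u
  have h8 : xt u.1 = 0 := congrFun hxt0 u.1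
  rw [hxt_pos u.1 u.2] at h8
  rw [show (⟨u.1, u.2⟩ : {v // v ∈ Sfin}) = u from rfl] at h8
  rw [h8]
  rfl
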